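/- (Proposition 3) Let G_k=(V,E,k) be a strongly connected labeled simple digraph and let G_ℰ=(V,ℰ) be a star graph with root i_m. Then the core matrix 𝒜_{k,ℰ} ∈ ℝ^{ℰ×ℰ}, i.e. the unique matrix with A_k diag(K_k) = −I_ℰ 𝒜_{k,ℰ} I_ℰ^T, has entries (𝒜_{k,ℰ})_{(i→i_m),(j→i_m)} = −(A_k)_{i,j} (K_k)_j for all i,j ∈ V \ {i_m}; that is, 𝒜_{k,ℰ} equals −A_k diag(K_k) with row i_m and column i_m removed. Consequently, 𝒜_{k,ℰ} has positive diagonal entries, nonpositive off-diagonal entries, and is row and column diagonally dominant. -/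

import Mathlib

open Matrix BigOperators Finset

variable {V : Type*}

/-- Directed reachability in the digraph with edge set `F`. -/
def dReach (F : Finset (V × V)) : V → V → Prop :=
  Relation.ReflTransGen fun a b => (a, b) ∈ F

/-- Reachability in the underlying undirected graph of the digraph with edge set `F`. -/
def uReach (F : Finset (V × V)) : V → V → Prop :=
  Relation.ReflTransGen fun a b => (a, b) ∈ F ∨ (b, a) ∈ F

/-- A digraph is strongly connected if every vertex reaches every other vertex. -/
def StronglyConnected (F : Finset (V × V)) : Prop :=
  ∀ i j : V, dReach F i j

/-- A simple digraph has no self-loops. -/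
def NoSelfLoops (F : Finset (V × V)) : Prop :=
  ∀ e ∈ F, e.1 ≠ e.2

/-- The edge set `F` contains a directed cycle. -/
def HasDirectedCycle (F : Finset (V × V)) : Prop :=
  ∃ v : V, Relation.TransGen (fun a b => (a, b) ∈ F) v v

/-- The Laplacian matrix `A_k` of the labeled digraph `(V, F, k)`:
`(A_k)_{i,j} = k_{j→i}` if `(j→i) ∈ F`, `(A_k)_{i,i} = -∑_{(i→j)∈F} k_{i→j}`, and `0` otherwise. -/
noncomputable def digraphLaplacian [Fintype V] [DecidableEq V]
    (F : Finset (V × V)) (k : V × V → ℝ) : Matrix V V ℝ :=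
  Matrix.of fun i j =>
    if i = j then -(∑ e ∈ F.filter (fun e => e.1 = i), k e)
    else if (j, i) ∈ F then k (j, i) else 0

/-- `T` is a directed spanning tree of the strongly connected digraph `E`, rooted at `i`
and directed towards the root: no directed cycle, and every vertex except `i`
is the source of exactly one edge. -/
def IsSpanningTreeTo [DecidableEq V] (E : Finset (V × V)) (i : V)
    (T : Finset (V × V)) : Prop :=
  T ⊆ E ∧ ¬ HasDirectedCycle T ∧
    ∀ j : V, j ≠ i → (T.filter (fun e => e.1 = j)).card = 1

open scoped Classical in
/-- The tree constant `(K_k)_i = ∑_{T ∈ T_i} ∏_{(j→j')∈T} k_{j→j'}`. -/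
noncomputable def treeConst [Fintype V] [DecidableEq V]
    (E : Finset (V × V)) (k : V × V → ℝ) (i : V) : ℝ :=
  ∑ T ∈ E.powerset.filter (fun T => IsSpanningTreeTo E i T), ∏ e ∈ T, k e

/-- The incidence matrix of the digraph with edge set `F`: in the column of edge `(j→j')`,
entry `-1` in row `j`, entry `+1` in row `j'`, and `0` elsewhere. -/
noncomputable def incidence [DecidableEq V] (F : Finset (V × V)) :
    Matrix V {e : V × V // e ∈ F} ℝ :=
  Matrix.of fun i e =>
    (if (e : V × V).2 = i then (1 : ℝ) else 0) - (if (e : V × V).1 = i then (1 : ℝ) else 0)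

/-- A star graph with root `r` on the vertex set `V`: the edges are `i → r` for all
vertices `i ≠ r`. -/
def IsStarGraph {V : Type*} [Fintype V] [DecidableEq V] (F : Finset (V × V)) (r : V) : Prop :=
  F = (Finset.univ.filter (fun i => i ≠ r)).image (fun i => (i, r))

open Matrix BigOperators Finset Relation

section Tree
variable {V : Type*} [DecidableEq V]

lemma no_cycle_insert (T : Finset (V × V)) (S : Finset V)
    (hT : ∀ e ∈ T, e.1 ∈ S ∧ e.2 ∈ S)
    (hnc : ¬ HasDirectedCycle T) {a b : V} (ha : a ∉ S) (hb : b ∈ S) :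
    ¬ HasDirectedCycle (insert (a, b) T) := by
  rintro ⟨v, hv⟩
  have hreach : ∀ y, ReflTransGen (fun x y => (x, y) ∈ insert (a, b) T) b y → y ∈ S := by
    intro y hy
    induction hy with
    | refl => exact hb
    | @tail c y h₁ h₂ ih =>
      rcases Finset.mem_insert.mp h₂ with h | h
      · have hc : c = a := congrArg Prod.fst h
        exact absurd (hc ▸ ih) ha
      · exact (hT _ h).2
  have hdecomp : ∀ v w, TransGen (fun x y => (x, y) ∈ insert (a, b) T) v w →
      TransGen (fun x y => (x, y) ∈ T) v w ∨
      (ReflTransGen (fun x y => (x, y) ∈ insert (a, b) T) v a ∧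
       ReflTransGen (fun x y => (x, y) ∈ insert (a, b) T) b w) := by
    intro v w h
    induction h with
    | @single c h =>
      rcases Finset.mem_insert.mp h with h | h
      · right
        have h1 : v = a := congrArg Prod.fst h
        have h2 : c = b := congrArg Prod.snd h
        subst h1; subst h2
        exact ⟨ReflTransGen.refl, ReflTransGen.refl⟩
      · left; exact TransGen.single h
    | @tail c w h₁ h₂ ih =>
      rcases Finset.mem_insert.mp h₂ with h | h
      · right
        have h1 : c = a := congrArg Prod.fst h
        have h2 : w = b := congrArg Prod.snd h
        subst h1; subst h2
        exact ⟨h₁.to_reflTransGen, ReflTransGen.refl⟩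
      · rcases ih with ih | ⟨ih1, ih2⟩
        · left; exact ih.tail h
        · right; exact ⟨ih1, ih2.tail (Finset.mem_insert_of_mem h)⟩
  rcases hdecomp v v hv with h | ⟨h1, h2⟩
  · exact hnc ⟨v, h⟩
  · exact absurd (hreach a (h2.trans h1)) ha

lemma enter_edge (E : Finset (V × V)) (S : Finset V) {j i : V}
    (h : dReach E j i) (hj : j ∉ S) (hi : i ∈ S) :
    ∃ a b, (a, b) ∈ E ∧ a ∉ S ∧ b ∈ S := by
  revert hi
  induction h with
  | refl => exact fun hi => absurd hi hj
  | @tail c y h₁ h₂ ih =>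
    intro hy
    by_cases hc : c ∈ S
    · exact ih hc
    · exact ⟨c, y, h₂, hc, hy⟩

lemma exists_spanning_tree {V : Type*} [Fintype V] [DecidableEq V]
    (E : Finset (V × V)) (hsc : StronglyConnected E) (i : V) :
    ∃ T : Finset (V × V), IsSpanningTreeTo E i T := by
  classical
  suffices h : ∀ n (S : Finset V), Sᶜ.card = n → i ∈ S →
      (∃ T : Finset (V × V), T ⊆ E ∧ (∀ e ∈ T, e.1 ∈ S ∧ e.1 ≠ i ∧ e.2 ∈ S) ∧
        (∀ j ∈ S, j ≠ i → (T.filter (fun e => e.1 = j)).card = 1) ∧ ¬ HasDirectedCycle T) →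
      ∃ T : Finset (V × V), IsSpanningTreeTo E i T by
    refine h _ {i} rfl (Finset.mem_singleton_self i) ⟨∅, by simp, by simp, ?_, ?_⟩
    · intro j hj hji
      exact absurd (Finset.mem_singleton.mp hj) hji
    · rintro ⟨v, hv⟩
      cases hv with
      | single h => simp at h
      | tail _ h => simp at h
  intro n
  induction n using Nat.strong_induction_on with
  | _ n ih =>
    rintro S hcard hiS ⟨T, hTE, hTS, hdeg, hnc⟩
    by_cases hS : S = Finset.univ
    · subst hS
      exact ⟨T, hTE, hnc, fun j hj => hdeg j (Finset.mem_univ j) hj⟩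
    · obtain ⟨j, hj⟩ : ∃ j, j ∉ S := by
        by_contra h; push_neg at h; exact hS (Finset.eq_univ_iff_forall.mpr h)
      obtain ⟨a, b, hab, haS, hbS⟩ := enter_edge E S (hsc j i) hj hiS
      have hamem : a ∈ Sᶜ := Finset.mem_compl.mpr haS
      have hcard' : (insert a S)ᶜ.card < n := by
        rw [Finset.compl_insert]
        exact hcard ▸ Finset.card_erase_lt_of_mem hamem
      refine ih _ hcard' (insert a S) rfl (Finset.mem_insert_of_mem hiS)
        ⟨insert (a, b) T, Finset.insert_subset hab hTE, ?_, ?_, ?_⟩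
      · intro e he
        rcases Finset.mem_insert.mp he with h | h
        · subst h
          exact ⟨Finset.mem_insert_self a S, fun h => haS (by rw [show a = i from h]; exact hiS),
            Finset.mem_insert_of_mem hbS⟩
        · obtain ⟨h1, h2, h3⟩ := hTS e h
          exact ⟨Finset.mem_insert_of_mem h1, h2, Finset.mem_insert_of_mem h3⟩
      · intro j' hj' hji
        by_cases hja : j' = a
        · subst hja
          have hfil : T.filter (fun e => e.1 = j') = ∅ := by
            apply Finset.filter_eq_empty_iff.mpr
            intro e he hej
            exact haS (hej ▸ (hTS e he).1)
          rw [Finset.filter_insert]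
          simp [hfil]
        · have hjS : j' ∈ S := by
            rcases Finset.mem_insert.mp hj' with h | h
            · exact absurd h hja
            · exact h
          rw [Finset.filter_insert]
          have : ¬ ((a, b).1 = j') := fun h => hja (h.symm)
          rw [if_neg this]
          exact hdeg j' hjS hji
      · exact no_cycle_insert T S (fun e he => ⟨(hTS e he).1, (hTS e he).2.2⟩) hnc haS hbS

lemma treeConst_pos {V : Type*} [Fintype V] [DecidableEq V]
    (E : Finset (V × V)) (k : V × V → ℝ) (hk : ∀ e ∈ E, 0 < k e)
    (hsc : StronglyConnected E) (i : V) : 0 < treeConst E k i := by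
  classical
  unfold treeConst
  apply Finset.sum_pos
  · intro T hT
    have hTE : T ⊆ E := Finset.mem_powerset.mp (Finset.mem_filter.mp hT).1
    exact Finset.prod_pos fun e he => hk e (hTE he)
  · obtain ⟨T, hT⟩ := exists_spanning_tree E hsc i
    exact ⟨T, Finset.mem_filter.mpr ⟨Finset.mem_powerset.mpr hT.1, hT⟩⟩

end Tree

section Star
variable {V : Type*} [Fintype V] [DecidableEq V] {F : Finset (V × V)} {r : V}

lemma star_mem (hF : IsStarGraph F r) {p : V} : (p, r) ∈ F ↔ p ≠ r := by
  rw [hF]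
  constructor
  · intro h
    obtain ⟨x, hx, he⟩ := Finset.mem_image.mp h
    have : x = p := congrArg Prod.fst he
    subst this
    exact (Finset.mem_filter.mp hx).2
  · intro h
    exact Finset.mem_image.mpr ⟨p, Finset.mem_filter.mpr ⟨Finset.mem_univ p, h⟩, rfl⟩

lemma star_val' (hF : IsStarGraph F r) {e : V × V} (h2' : e ∈ F) :
    e = (e.1, r) ∧ e.1 ≠ r := by
  have h2 : e ∈ (Finset.univ.filter (fun i => i ≠ r)).image (fun i => (i, r)) := hF ▸ h2'
  obtain ⟨x, hx, he⟩ := Finset.mem_image.mp h2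
  constructor
  · rw [← he]
  · rw [← he]
    exact (Finset.mem_filter.mp hx).2

lemma star_val (hF : IsStarGraph F r) (e : {e : V × V // e ∈ F}) :
    (e : V × V) = ((e : V × V).1, r) ∧ (e : V × V).1 ≠ r := star_val' hF e.2

lemma sum_incidence_mul (hF : IsStarGraph F r) {p : V} (hp : p ≠ r)
    (g : {e : V × V // e ∈ F} → ℝ) :
    ∑ a : {e : V × V // e ∈ F}, incidence F p a * g a
      = -g ⟨(p, r), (star_mem hF).mpr hp⟩ := by
  have key : ∀ a : {e : V × V // e ∈ F}, incidence F p a * g a =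
      if a = ⟨(p, r), (star_mem hF).mpr hp⟩ then -g ⟨(p, r), (star_mem hF).mpr hp⟩ else 0 := by
    intro a
    obtain ⟨hval, hne⟩ := star_val hF a
    by_cases h : a = ⟨(p, r), (star_mem hF).mpr hp⟩
    · subst h
      simp only [incidence, Matrix.of_apply, if_pos rfl]
      rw [if_neg (fun h : r = p => hp h.symm)]
      simp
    · rw [if_neg h]
      have h1 : (a : V × V).1 ≠ p := by
        intro h1
        exact h (Subtype.ext (by rw [hval, h1]))
      have h2 : (a : V × V).2 ≠ p := by
        rw [hval]
        exact fun h2 => hp h2.symm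
      simp only [incidence, Matrix.of_apply, if_neg h2, if_neg h1]
      ring
  rw [Finset.sum_congr rfl (fun a _ => key a), Finset.sum_ite_eq' Finset.univ]
  simp

lemma sum_incidence_col (a : {e : V × V // e ∈ F}) :
    ∑ p, incidence F p a = 0 := by
  simp [incidence, Finset.sum_sub_distrib, Finset.sum_ite_eq]

end Star

/-- (Proposition 3) For a strongly connected labeled simple digraph and a star graph `G_ℰ`
with root `r`, the core matrix `𝒜_{k,ℰ}` (the unique matrix with
`A_k diag(K_k) = -I_ℰ 𝒜_{k,ℰ} I_ℰᵀ`) has entries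
`(𝒜_{k,ℰ})_{(i→r),(j→r)} = -(A_k)_{i,j} (K_k)_j`, i.e. it equals `-A_k diag(K_k)` with
row `r` and column `r` removed; consequently it has positive diagonal entries, nonpositive
off-diagonal entries, and is row and column diagonally dominant. -/
theorem core_matrix_star
    {V : Type*} [Fintype V] [DecidableEq V]
    (E : Finset (V × V)) (hloop : NoSelfLoops E)
    (k : V × V → ℝ) (hk : ∀ e ∈ E, 0 < k e)
    (hsc : StronglyConnected E)
    (r : V) (F : Finset (V × V)) (hF : IsStarGraph F r) :
    ∀ A : Matrix {e : V × V // e ∈ F} {e : V × V // e ∈ F} ℝ,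
      digraphLaplacian E k * Matrix.diagonal (treeConst E k) = -(incidence F * A * (incidence F)ᵀ) →
      (∀ e e' : {e : V × V // e ∈ F},
        A e e' = -(digraphLaplacian E k (e : V × V).1 (e' : V × V).1 * treeConst E k (e' : V × V).1)) ∧
      (∀ e : {e : V × V // e ∈ F}, 0 < A e e) ∧
      (∀ e e' : {e : V × V // e ∈ F}, e ≠ e' → A e e' ≤ 0) ∧
      (∀ e : {e : V × V // e ∈ F}, ∑ e' ∈ Finset.univ.erase e, |A e e'| ≤ |A e e|) ∧
      (∀ e' : {e : V × V // e ∈ F}, ∑ e ∈ Finset.univ.erase e', |A e e'| ≤ |A e' e'|) := by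
  intro A hA
  set L := digraphLaplacian E k with hL
  set K := treeConst E k with hK
  have hKpos : ∀ i, 0 < K i := treeConst_pos E k hk hsc
  -- entry formula for I*A*Iᵀ
  have hIAI : ∀ (p q : V) (hp : p ≠ r) (hq : q ≠ r),
      (incidence F * A * (incidence F)ᵀ) p q
        = A ⟨(p, r), (star_mem hF).mpr hp⟩ ⟨(q, r), (star_mem hF).mpr hq⟩ := by
    intro p q hp hq
    rw [Matrix.mul_apply]
    have hc : ∀ b, (incidence F * A) p b * (incidence F)ᵀ b q
        = incidence F q b * (incidence F * A) p b := by
      intro b; rw [Matrix.transpose_apply]; ring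
    rw [Finset.sum_congr rfl (fun b _ => hc b), sum_incidence_mul hF hq]
    rw [Matrix.mul_apply, sum_incidence_mul hF hp]
    ring
  -- entry formula for A
  have hentry : ∀ e e' : {e : V × V // e ∈ F},
      A e e' = -(L (e : V × V).1 (e' : V × V).1 * K (e' : V × V).1) := by
    intro e e'
    obtain ⟨hval, hne⟩ := star_val hF e
    obtain ⟨hval', hne'⟩ := star_val hF e'
    have h := congrFun (congrFun hA (e : V × V).1) (e' : V × V).1
    rw [Matrix.mul_diagonal, Matrix.neg_apply, hIAI _ _ hne hne',
      show (⟨((e : V × V).1, r), (star_mem hF).mpr hne⟩ : {e : V × V // e ∈ F}) = e from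
        Subtype.ext hval.symm,
      show (⟨((e' : V × V).1, r), (star_mem hF).mpr hne'⟩ : {e : V × V // e ∈ F}) = e' from
        Subtype.ext hval'.symm] at h
    linarith
  -- row sums of L * diag K vanish
  have hrow : ∀ p, ∑ q, L p q * K q = 0 := by
    intro p
    have hR : ∑ q, (incidence F * A * (incidence F)ᵀ) p q = 0 := by
      simp only [Matrix.mul_apply, Matrix.transpose_apply]
      rw [Finset.sum_comm]
      apply Finset.sum_eq_zero
      intro b _
      rw [← Finset.mul_sum, sum_incidence_col b, mul_zero]
    have h0 : ∑ q, L p q * K q = -∑ q, (incidence F * A * (incidence F)ᵀ) p q := by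
      rw [← Finset.sum_neg_distrib]
      apply Finset.sum_congr rfl
      intro q _
      have := congrFun (congrFun hA p) q
      rw [Matrix.mul_diagonal] at this
      rw [this, Matrix.neg_apply]
    rw [h0, hR, neg_zero]
  -- column sums of L vanish
  have hcolL : ∀ q, ∑ p, L p q = 0 := by
    intro q
    have hR : ∑ p, (incidence F * A * (incidence F)ᵀ) p q = 0 := by
      simp only [Matrix.mul_apply, Matrix.transpose_apply]
      rw [Finset.sum_comm]
      apply Finset.sum_eq_zero
      intro b _
      rw [← Finset.sum_mul]
      have : ∑ p, ∑ a, incidence F p a * A a b = 0 := by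
        rw [Finset.sum_comm]
        apply Finset.sum_eq_zero
        intro a _
        rw [← Finset.sum_mul, sum_incidence_col a, zero_mul]
      rw [this, zero_mul]
    have h0 : (∑ p, L p q) * K q = -∑ p, (incidence F * A * (incidence F)ᵀ) p q := by
      rw [Finset.sum_mul, ← Finset.sum_neg_distrib]
      apply Finset.sum_congr rfl
      intro p _
      have := congrFun (congrFun hA p) q
      rw [Matrix.mul_diagonal] at this
      rw [this, Matrix.neg_apply]
    rw [hR, neg_zero] at h0
    exact (mul_eq_zero.mp h0).resolve_right (ne_of_gt (hKpos q))
  -- the diagonal of -L is positive off r... at every vertex with an out-edge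
  have hdiagL : ∀ i : V, i ≠ r → 0 < -(L i i) := by
    intro i hir
    have hre : Relation.ReflTransGen (fun a b => (a, b) ∈ E) i r := hsc i r
    obtain ⟨c, hc⟩ : ∃ c, (i, c) ∈ E := by
      rcases hre.cases_head with h | ⟨c, hc, _⟩
      · exact absurd h hir
      · exact ⟨c, hc⟩
    rw [hL]
    simp only [digraphLaplacian, Matrix.of_apply, eq_self_iff_true, if_true, neg_neg]
    apply Finset.sum_pos
    · intro e he
      exact hk e (Finset.mem_filter.mp he).1
    · exact ⟨(i, c), Finset.mem_filter.mpr ⟨hc, rfl⟩⟩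
  have hoffL : ∀ i j : V, i ≠ j → 0 ≤ L i j := by
    intro i j hij
    rw [hL]
    simp only [digraphLaplacian, Matrix.of_apply, if_neg hij]
    split
    · exact le_of_lt (hk _ ‹_›)
    · exact le_refl 0
  have hne_idx : ∀ e e' : {e : V × V // e ∈ F}, e ≠ e' → (e : V × V).1 ≠ (e' : V × V).1 := by
    intro e e' h h1
    exact h (Subtype.ext (by rw [(star_val hF e).1, (star_val hF e').1, h1]))
  have hdiag : ∀ e : {e : V × V // e ∈ F}, 0 < A e e := by
    intro e
    rw [hentry e e]
    have h1 := hdiagL _ (star_val hF e).2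
    have h2 := hKpos (e : V × V).1
    nlinarith
  have hoff : ∀ e e' : {e : V × V // e ∈ F}, e ≠ e' → A e e' ≤ 0 := by
    intro e e' h
    rw [hentry e e']
    have := mul_nonneg (hoffL _ _ (hne_idx e e' h)) (le_of_lt (hKpos (e' : V × V).1))
    linarith
  refine ⟨hentry, hdiag, hoff, ?_, ?_⟩
  · -- row diagonal dominance
    intro e
    set i := (e : V × V).1 with hi
    have hir : i ≠ r := (star_val hF e).2
    have habs : ∀ e' ∈ Finset.univ.erase e, |A e e'| = L i (e' : V × V).1 * K (e' : V × V).1 := by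
      intro e' he'
      have hne : e ≠ e' := fun h => (Finset.mem_erase.mp he').1 h.symm
      rw [hentry e e', abs_neg,
        abs_of_nonneg (mul_nonneg (hoffL _ _ (hne_idx e e' hne)) (le_of_lt (hKpos _)))]
    rw [Finset.sum_congr rfl habs, abs_of_pos (hdiag e)]
    have hbij : ∑ e' ∈ Finset.univ.erase e, L i (e' : V × V).1 * K (e' : V × V).1
        = ∑ q ∈ (Finset.univ.erase i).erase r, L i q * K q := by
      refine Finset.sum_bij' (fun e' _ => (e' : V × V).1)
        (fun q hq => ⟨(q, r), (star_mem hF).mpr (Finset.mem_erase.mp hq).1⟩) ?_ ?_ ?_ ?_ ?_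
      · intro e' he'
        have hne : e ≠ e' := fun h => (Finset.mem_erase.mp he').1 h.symm
        exact Finset.mem_erase.mpr ⟨(star_val hF e').2,
          Finset.mem_erase.mpr ⟨(hne_idx e e' hne).symm, Finset.mem_univ _⟩⟩
      · intro q hq
        obtain ⟨hqr, hq2⟩ := Finset.mem_erase.mp hq
        have hqi : q ≠ i := (Finset.mem_erase.mp hq2).1
        refine Finset.mem_erase.mpr ⟨?_, Finset.mem_univ _⟩
        intro h
        exact hqi (by rw [hi, ← h])
      · intro e' he'
        exact Subtype.ext ((star_val hF e').1).symm
      · intro q hq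
        rfl
      · intro e' _
        rfl
    rw [hbij]
    have hsub : ∑ q ∈ (Finset.univ.erase i).erase r, L i q * K q
        ≤ ∑ q ∈ Finset.univ.erase i, L i q * K q := by
      apply Finset.sum_le_sum_of_subset_of_nonneg (Finset.erase_subset _ _)
      intro q hq _
      exact mul_nonneg (hoffL i q (fun h => (Finset.mem_erase.mp hq).1 h.symm))
        (le_of_lt (hKpos q))
    have hsumrow : ∑ q ∈ Finset.univ.erase i, L i q * K q = -(L i i * K i) := by
      have h1 : L i i * K i + ∑ x ∈ Finset.univ.erase i, L i x * K x = ∑ x, L i x * K x :=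
        Finset.add_sum_erase Finset.univ (fun q => L i q * K q) (Finset.mem_univ i)
      have h0 := hrow i
      linarith
    rw [hentry e e]
    calc ∑ q ∈ (Finset.univ.erase i).erase r, L i q * K q
        ≤ ∑ q ∈ Finset.univ.erase i, L i q * K q := hsub
      _ = -(L i i * K i) := hsumrow
  · -- column diagonal dominance
    intro e'
    set j := (e' : V × V).1 with hj
    have hjr : j ≠ r := (star_val hF e').2
    have habs : ∀ e ∈ Finset.univ.erase e', |A e e'| = L (e : V × V).1 j * K j := by
      intro e he
      have hne : e ≠ e' := (Finset.mem_erase.mp he).1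
      rw [hentry e e', abs_neg,
        abs_of_nonneg (mul_nonneg (hoffL _ _ (hne_idx e e' hne)) (le_of_lt (hKpos _)))]
    rw [Finset.sum_congr rfl habs, abs_of_pos (hdiag e')]
    have hbij : ∑ e ∈ Finset.univ.erase e', L (e : V × V).1 j * K j
        = ∑ q ∈ (Finset.univ.erase j).erase r, L q j * K j := by
      refine Finset.sum_bij' (fun e _ => (e : V × V).1)
        (fun q hq => ⟨(q, r), (star_mem hF).mpr (Finset.mem_erase.mp hq).1⟩) ?_ ?_ ?_ ?_ ?_
      · intro e he
        have hne : e ≠ e' := (Finset.mem_erase.mp he).1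
        exact Finset.mem_erase.mpr ⟨(star_val hF e).2,
          Finset.mem_erase.mpr ⟨hne_idx e e' hne, Finset.mem_univ _⟩⟩
      · intro q hq
        obtain ⟨hqr, hq2⟩ := Finset.mem_erase.mp hq
        have hqj : q ≠ j := (Finset.mem_erase.mp hq2).1
        refine Finset.mem_erase.mpr ⟨?_, Finset.mem_univ _⟩
        intro h
        exact hqj (by rw [hj, ← h])
      · intro e he
        exact Subtype.ext ((star_val hF e).1).symm
      · intro q hq
        rfl
      · intro e _
        rfl
    rw [hbij]
    have hsumcol : ∑ q ∈ Finset.univ.erase j, L q j = -(L j j) := by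
      have h1 : L j j + ∑ x ∈ Finset.univ.erase j, L x j = ∑ x, L x j :=
        Finset.add_sum_erase Finset.univ (fun q => L q j) (Finset.mem_univ j)
      have h0 := hcolL j
      linarith
    have hsub : ∑ q ∈ (Finset.univ.erase j).erase r, L q j
        ≤ ∑ q ∈ Finset.univ.erase j, L q j := by
      apply Finset.sum_le_sum_of_subset_of_nonneg (Finset.erase_subset _ _)
      intro q hq _
      exact hoffL q j (Finset.mem_erase.mp hq).1
    rw [hentry e' e', ← Finset.sum_mul]
    have hKj := le_of_lt (hKpos j)
    calc (∑ q ∈ (Finset.univ.erase j).erase r, L q j) * K j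
        ≤ (∑ q ∈ Finset.univ.erase j, L q j) * K j := by
          apply mul_le_mul_of_nonneg_right hsub hKj
      _ = -(L j j) * K j := by rw [hsumcol]
      _ = -(L j j * K j) := by ring
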